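/- For every odd natural number n = 2m+1 with m ≥ 1, the finite set of rational numbers S_n = {β/α : (α, β) ∈ Γ_n} has cardinality (1/2)·∑_{s=1}^{m} φ(2s+1), where φ is Euler's totient function. -/

import Mathlib

lemma aux_cop_sub (d c : ℕ) (hle : c ≤ d) (hcop : Nat.Coprime c d) : Nat.Coprime (d - c) d := by
  have h1 : Nat.Coprime (d - c) c := (Nat.coprime_sub_self_left hle).mpr hcop.symm
  have h2 : Nat.Coprime (d - c) (c + (d - c)) := Nat.coprime_add_self_right.mpr h1
  rwa [show c + (d - c) = d from by omega] at h2

lemma aux_half_tot (d : ℕ) (hd : Odd d) (h1 : 1 < d) :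
    2 * ((Finset.range d).filter (fun c => Even c ∧ Nat.Coprime c d)).card = d.totient := by
  classical
  have hd2 : d % 2 = 1 := Nat.odd_iff.mp hd
  have pos_of_mem : ∀ c, c < d → Nat.Coprime c d → 0 < c := by
    intro c _ hcop
    rcases Nat.eq_zero_or_pos c with h | h
    · subst h; rw [Nat.coprime_zero_left] at hcop; omega
    · exact h
  have key : ((Finset.range d).filter (fun c => Even c ∧ Nat.Coprime c d)).card
      = ((Finset.range d).filter (fun c => ¬ Even c ∧ Nat.Coprime c d)).card := by
    apply Finset.card_bij (fun c _ => d - c)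
    · intro c hc
      simp only [Finset.mem_filter, Finset.mem_range, Nat.even_iff] at hc ⊢
      obtain ⟨hlt, hev, hcop⟩ := hc
      have := pos_of_mem c hlt hcop
      exact ⟨by omega, by omega, aux_cop_sub d c hlt.le hcop⟩
    · intro c1 hc1 c2 hc2 h
      simp only [Finset.mem_filter, Finset.mem_range] at hc1 hc2
      omega
    · intro c hc
      simp only [Finset.mem_filter, Finset.mem_range, Nat.even_iff] at hc
      obtain ⟨hlt, hodd, hcop⟩ := hc
      have := pos_of_mem c hlt hcop
      refine ⟨d - c, ?_, by omega⟩
      simp only [Finset.mem_filter, Finset.mem_range, Nat.even_iff]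
      exact ⟨by omega, by omega, aux_cop_sub d c hlt.le hcop⟩
  have htot : d.totient = ((Finset.range d).filter (fun c => Nat.Coprime c d)).card := by
    rw [Nat.totient]
    congr 1
    apply Finset.filter_congr
    intro x _
    simp [Nat.coprime_comm]
  have hsplit := Finset.card_filter_add_card_filter_not
    (s := (Finset.range d).filter (fun c => Nat.Coprime c d)) (p := fun c => Even c)
  rw [Finset.filter_filter, Finset.filter_filter] at hsplit
  have e1 : ((Finset.range d).filter fun c => Nat.Coprime c d ∧ Even c)
      = ((Finset.range d).filter fun c => Even c ∧ Nat.Coprime c d) := by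
    apply Finset.filter_congr; intro x _; simp [and_comm]
  have e2 : ((Finset.range d).filter fun c => Nat.Coprime c d ∧ ¬ Even c)
      = ((Finset.range d).filter fun c => ¬ Even c ∧ Nat.Coprime c d) := by
    apply Finset.filter_congr; intro x _; simp [and_comm]
  rw [e1, e2, ← key] at hsplit
  omega

lemma aux_den_eq (c k : ℕ) (hk : 0 < k) (h : Nat.Coprime c k) : ((c:ℚ)/(k:ℚ)).den = k := by
  have h2 := Rat.den_div_eq_of_coprime (a := (c:ℤ)) (b := (k:ℤ))
    (by exact_mod_cast hk) (by simpa using h)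
  push_cast at h2
  exact_mod_cast h2

lemma aux_num_eq (c k : ℕ) (hk : 0 < k) (h : Nat.Coprime c k) : ((c:ℚ)/(k:ℚ)).num = c := by
  have h2 := Rat.num_div_eq_of_coprime (a := (c:ℤ)) (b := (k:ℤ))
    (by exact_mod_cast hk) (by simpa using h)
  push_cast at h2
  exact_mod_cast h2

lemma aux_set_eq (m n : ℕ) (hn : n = 2 * m + 1) :
    ({q : ℚ | ∃ α β : ℕ, 0 < α ∧ 0 < β ∧ Odd α ∧ Even β ∧ β < α ∧ α ≤ n ∧
        q = (β : ℚ) / α} : Set ℚ) =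
    ↑((Finset.Icc 1 m).biUnion (fun s =>
      ((Finset.range (2*s+1)).filter (fun c => Even c ∧ Nat.Coprime c (2*s+1))).image
        (fun c : ℕ => (c:ℚ)/((2*s+1 : ℕ) : ℚ)))) := by
  ext q
  simp only [Set.mem_setOf_eq, Finset.coe_biUnion, Set.mem_iUnion, Finset.mem_coe,
    Finset.mem_image, Finset.mem_filter, Finset.mem_range, Finset.mem_Icc]
  constructor
  · rintro ⟨α, β, hα, hβ, hαodd, hβev, hlt, hle, rfl⟩
    have hgpos : 0 < Nat.gcd β α := Nat.gcd_pos_of_pos_right β hα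
    have hcop' : Nat.Coprime (β / Nat.gcd β α) (α / Nat.gcd β α) :=
      Nat.coprime_div_gcd_div_gcd hgpos
    obtain ⟨d, hd⟩ := Nat.gcd_dvd_right β α
    obtain ⟨c, hc⟩ := Nat.gcd_dvd_left β α
    set g := Nat.gcd β α with hg
    have hcd : β / g = c := by rw [hc]; exact Nat.mul_div_cancel_left c hgpos
    have hdd : α / g = d := by rw [hd]; exact Nat.mul_div_cancel_left d hgpos
    rw [hcd, hdd] at hcop'
    have hαm : α % 2 = 1 := Nat.odd_iff.mp hαodd
    have hβm : β % 2 = 0 := Nat.even_iff.mp hβev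
    have hgodd : g % 2 = 1 := by
      rcases Nat.even_or_odd g with h | h
      · exfalso; have h2 := Nat.even_iff.mp h
        have : α % 2 = 0 := by rw [hd, Nat.mul_mod, h2]; simp
        omega
      · exact Nat.odd_iff.mp h
    have hdodd : d % 2 = 1 := by
      rcases Nat.even_or_odd d with h | h
      · exfalso; have h2 := Nat.even_iff.mp h
        have : α % 2 = 0 := by rw [hd, Nat.mul_mod, h2]; simp
        omega
      · exact Nat.odd_iff.mp h
    have hcev : c % 2 = 0 := by
      rcases Nat.even_or_odd c with h | h
      · exact Nat.even_iff.mp h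
      · exfalso; have h2 := Nat.odd_iff.mp h
        have : β % 2 = 1 := by rw [hc, Nat.mul_mod, h2, hgodd]
        omega
    have hcltd : c < d := by
      have hlt' : g * c < g * d := by rw [← hc, ← hd]; exact hlt
      exact lt_of_mul_lt_mul_left hlt' (Nat.zero_le g)
    have hcpos : 0 < c := by
      rcases Nat.eq_zero_or_pos c with h | h
      · exfalso; rw [h, mul_zero] at hc; omega
      · exact h
    have hdlen : d ≤ n := by
      calc d ≤ g * d := Nat.le_mul_of_pos_left d hgpos
      _ = α := hd.symm
      _ ≤ n := hle
    have hd3 : 3 ≤ d := by omega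
    have hde : (2 * ((d-1)/2) + 1) = d := by omega
    refine ⟨(d - 1) / 2, ⟨by omega, by omega⟩, c, ⟨by omega, Nat.even_iff.mpr hcev, ?_⟩, ?_⟩
    · rw [hde]; exact hcop'
    · rw [hde, hd, hc]
      push_cast
      rw [mul_comm (g:ℚ) c, mul_comm (g:ℚ) d, mul_div_mul_right]
      exact_mod_cast hgpos.ne'
  · rintro ⟨s, ⟨hs1, hs2⟩, c, ⟨hclt, hcev, hccop⟩, rfl⟩
    have hcpos : 0 < c := by
      rcases Nat.eq_zero_or_pos c with h | h
      · exfalso; subst h; rw [Nat.coprime_zero_left] at hccop; omega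
      · exact h
    exact ⟨2*s+1, c, by omega, hcpos, ⟨s, by ring⟩, hcev, hclt, by omega, rfl⟩

/-- Proposition C(ii) restated for the set of critical values: for odd n = 2m+1, the set
    S_n = {β/α : (α,β) ∈ Γ_n} of rationals has cardinality (1/2)·∑_{s=1}^m φ(2s+1). -/
theorem stmt_2 (m n : ℕ) (hm : 1 ≤ m) (hn : n = 2 * m + 1) :
    ({q : ℚ | ∃ α β : ℕ, 0 < α ∧ 0 < β ∧ Odd α ∧ Even β ∧ β < α ∧ α ≤ n ∧
        q = (β : ℚ) / α} : Set ℚ).Finite ∧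
    2 * ({q : ℚ | ∃ α β : ℕ, 0 < α ∧ 0 < β ∧ Odd α ∧ Even β ∧ β < α ∧ α ≤ n ∧
        q = (β : ℚ) / α} : Set ℚ).ncard =
      ∑ s ∈ Finset.Icc 1 m, Nat.totient (2 * s + 1) := by
  classical
  rw [aux_set_eq m n hn]
  refine ⟨Finset.finite_toSet _, ?_⟩
  rw [Set.ncard_coe_finset]
  rw [Finset.card_biUnion]
  · rw [Finset.mul_sum]
    apply Finset.sum_congr rfl
    intro s hs
    simp only [Finset.mem_Icc] at hs
    rw [Finset.card_image_of_injOn]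
    · exact aux_half_tot (2*s+1) ⟨s, by ring⟩ (by omega)
    · intro c1 h1 c2 h2 heq
      simp only [Finset.mem_coe, Finset.mem_filter, Finset.mem_range] at h1 h2
      have e1 := aux_num_eq c1 (2*s+1) (by omega) h1.2.2
      have e2 := aux_num_eq c2 (2*s+1) (by omega) h2.2.2
      have heq' : ((c1:ℚ))/((2*s+1 : ℕ):ℚ) = (c2:ℚ)/((2*s+1 : ℕ):ℚ) := heq
      rw [heq'] at e1
      rw [e2] at e1
      exact_mod_cast e1.symm
  · intro s1 hs1 s2 hs2 hne
    simp only [Finset.mem_coe, Finset.mem_Icc] at hs1 hs2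
    rw [Function.onFun, Finset.disjoint_left]
    intro x hx1 hx2
    simp only [Finset.mem_image, Finset.mem_filter, Finset.mem_range] at hx1 hx2
    obtain ⟨c1, ⟨_, _, hcop1⟩, he1⟩ := hx1
    obtain ⟨c2, ⟨_, _, hcop2⟩, he2⟩ := hx2
    have d1 := aux_den_eq c1 (2*s1+1) (by omega) hcop1
    have d2 := aux_den_eq c2 (2*s2+1) (by omega) hcop2
    rw [he1] at d1
    rw [he2] at d2
    rw [d1] at d2
    omega
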